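/- Let M ≥ 1 be an integer. For r ∈ (0,1) and ϑ uniformly distributed on [0,2π], let P(r) denote the probability that (1−r²)/|1−re^{iϑ}|^{2M} > 1. Then P(r) is asymptotically equivalent to (1−r²)^{1/(2M)}/π as r → 1⁻, i.e. lim_{r→1⁻} π·P(r)/(1−r²)^{1/(2M)} = 1. -/

import Mathlib

open Complex MeasureTheory Set Filter
open scoped ENNReal Topology

noncomputable section

/-- For `r ∈ (0,1)` and `ϑ` uniform on `[0,2π]`, the probability that
`(1-r²)/|1-r e^{iϑ}|^{2M} > 1`. -/
def tailProb (M : ℕ) (r : ℝ) : ℝ :=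
  (volume {t : ℝ | t ∈ Set.Icc (0 : ℝ) (2 * Real.pi) ∧
      1 < (1 - r ^ 2) / ‖(1 : ℂ) - (r : ℂ) * Complex.exp ((t : ℂ) * Complex.I)‖ ^ (2 * M)}).toReal
    / (2 * Real.pi)

lemma norm_sq_eq' (r t : ℝ) :
    ‖(1 : ℂ) - (r : ℂ) * Complex.exp ((t : ℂ) * Complex.I)‖ ^ 2
      = 1 + r ^ 2 - 2 * r * Real.cos t := by
  rw [← Complex.normSq_eq_norm_sq, Complex.normSq_apply]
  simp [Complex.sub_re, Complex.sub_im, Complex.mul_re, Complex.mul_im,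
    Complex.exp_ofReal_mul_I_re, Complex.exp_ofReal_mul_I_im]
  nlinarith [Real.sin_sq_add_cos_sq t]

lemma cond_iff' (M : ℕ) (hM : 1 ≤ M) (r : ℝ) (hr0 : 0 < r) (hr1 : r < 1) (t : ℝ) :
    (1 < (1 - r ^ 2) / ‖(1 : ℂ) - (r : ℂ) * Complex.exp ((t : ℂ) * Complex.I)‖ ^ (2 * M))
      ↔ (1 + r ^ 2 - (1 - r ^ 2) ^ ((1:ℝ)/M)) / (2 * r) < Real.cos t := by
  have hMne : (M:ℝ) ≠ 0 := by positivity
  have hr2 : (0:ℝ) < 1 - r ^ 2 := by nlinarith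
  set ε := (1 - r ^ 2) ^ ((1:ℝ)/M) with hε
  have hε0 : 0 < ε := Real.rpow_pos_of_pos hr2 _
  have hεM : ε ^ M = 1 - r ^ 2 := by
    rw [hε, ← Real.rpow_natCast _ M, ← Real.rpow_mul hr2.le]
    rw [one_div_mul_cancel hMne, Real.rpow_one]
  set u := 1 + r ^ 2 - 2 * r * Real.cos t with hu
  have hu0 : 0 < u := by nlinarith [Real.cos_le_one t, Real.neg_one_le_cos t]
  have hA : ‖(1 : ℂ) - (r : ℂ) * Complex.exp ((t : ℂ) * Complex.I)‖ ^ (2 * M) = u ^ M := by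
    rw [pow_mul, norm_sq_eq']
  rw [hA, one_lt_div (by positivity)]
  rw [← hεM, pow_lt_pow_iff_left₀ hu0.le hε0.le (by omega)]
  rw [div_lt_iff₀ (by positivity)]
  constructor <;> intro h <;> nlinarith

lemma set_eq' (c : ℝ) (hc1 : -1 ≤ c) (hc2 : c ≤ 1) :
    {t : ℝ | t ∈ Set.Icc (0:ℝ) (2 * Real.pi) ∧ c < Real.cos t}
      = Set.Ico 0 (Real.arccos c) ∪ Set.Ioc (2 * Real.pi - Real.arccos c) (2 * Real.pi) := by
  have hpi := Real.pi_pos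
  set θ := Real.arccos c with hθ
  have hθ0 : 0 ≤ θ := Real.arccos_nonneg c
  have hθπ : θ ≤ Real.pi := Real.arccos_le_pi c
  have hcos : Real.cos θ = c := Real.cos_arccos hc1 hc2
  ext t
  simp only [Set.mem_setOf_eq, Set.mem_Icc, Set.mem_union, Set.mem_Ico, Set.mem_Ioc]
  constructor
  · rintro ⟨⟨ht0, ht2⟩, hlt⟩
    by_cases htπ : t ≤ Real.pi
    · exact Or.inl ⟨ht0,
        (Real.strictAntiOn_cos.lt_iff_gt ⟨hθ0, hθπ⟩ ⟨ht0, htπ⟩).mp (hcos ▸ hlt)⟩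
    · right
      push_neg at htπ
      refine ⟨?_, ht2⟩
      have h1 : 2 * Real.pi - t ∈ Set.Icc 0 Real.pi := ⟨by linarith, by linarith⟩
      have h2 : Real.cos θ < Real.cos (2 * Real.pi - t) := by
        rw [Real.cos_two_pi_sub, hcos]; exact hlt
      have := (Real.strictAntiOn_cos.lt_iff_gt ⟨hθ0, hθπ⟩ h1).mp h2
      linarith
  · rintro (⟨ht0, htθ⟩ | ⟨ht1, ht2⟩)
    · refine ⟨⟨ht0, by linarith⟩, ?_⟩
      have := (Real.strictAntiOn_cos.lt_iff_gt ⟨hθ0, hθπ⟩ ⟨ht0, by linarith⟩).mpr htθ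
      rwa [hcos] at this
    · refine ⟨⟨by linarith, ht2⟩, ?_⟩
      have h1 : 2 * Real.pi - t ∈ Set.Icc 0 Real.pi := ⟨by linarith, by linarith⟩
      have := (Real.strictAntiOn_cos.lt_iff_gt ⟨hθ0, hθπ⟩ h1).mpr (by linarith)
      rwa [hcos, Real.cos_two_pi_sub] at this

lemma tailProb_eq' (M : ℕ) (hM : 1 ≤ M) (r : ℝ) (hr0 : 0 < r) (hr1 : r < 1)
    (hc0 : 0 ≤ (1 + r ^ 2 - (1 - r ^ 2) ^ ((1:ℝ)/M)) / (2 * r))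
    (hc2 : (1 + r ^ 2 - (1 - r ^ 2) ^ ((1:ℝ)/M)) / (2 * r) ≤ 1) :
    tailProb M r
      = Real.arccos ((1 + r ^ 2 - (1 - r ^ 2) ^ ((1:ℝ)/M)) / (2 * r)) / Real.pi := by
  have hpi := Real.pi_pos
  set c := (1 + r ^ 2 - (1 - r ^ 2) ^ ((1:ℝ)/M)) / (2 * r) with hc
  set θ := Real.arccos c with hθ
  have hθ0 : 0 ≤ θ := Real.arccos_nonneg c
  have hθπ : θ ≤ Real.pi := Real.arccos_le_pi c
  have hset : {t : ℝ | t ∈ Set.Icc (0 : ℝ) (2 * Real.pi) ∧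
      1 < (1 - r ^ 2) / ‖(1 : ℂ) - (r : ℂ) * Complex.exp ((t : ℂ) * Complex.I)‖ ^ (2 * M)}
      = Set.Ico 0 θ ∪ Set.Ioc (2 * Real.pi - θ) (2 * Real.pi) := by
    rw [← set_eq' c (by linarith) hc2]
    ext t
    simp only [Set.mem_setOf_eq]
    exact and_congr_right fun _ => cond_iff' M hM r hr0 hr1 t
  unfold tailProb
  rw [hset, measure_union ?_ measurableSet_Ioc]
  · rw [Real.volume_Ico, Real.volume_Ioc,
      ENNReal.toReal_add ENNReal.ofReal_ne_top ENNReal.ofReal_ne_top,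
      ENNReal.toReal_ofReal (by linarith), ENNReal.toReal_ofReal (by linarith)]
    rw [show θ - 0 + (2 * Real.pi - (2 * Real.pi - θ)) = 2 * θ by ring]
    rw [div_eq_div_iff (by positivity) (by positivity)]
    ring
  · rw [Set.disjoint_left]
    rintro x ⟨_, h2⟩ ⟨h3, _⟩
    linarith

lemma arcsin_div_lim' : Tendsto (fun x : ℝ => Real.arcsin x / x) (𝓝[≠] (0:ℝ)) (𝓝 1) := by
  have h := Real.hasDerivAt_arcsin (by norm_num : (0:ℝ) ≠ -1) (by norm_num : (0:ℝ) ≠ 1)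
  have h2 : (1 : ℝ) / Real.sqrt (1 - 0 ^ 2) = 1 := by norm_num
  rw [h2] at h
  refine (hasDerivAt_iff_tendsto_slope.mp h).congr fun x => ?_
  simp [slope_def_field, div_eq_mul_inv, mul_comm]


set_option maxHeartbeats 1000000 in
/-- **Lemma (asymptotics).** Let `M ≥ 1`.  Then
`P( (1-r²)/|1-r e^{iϑ}|^{2M} > 1 ) ∼ (1-r²)^{1/(2M)}/π` as `r → 1⁻`, i.e.
`π · P(r)/(1-r²)^{1/(2M)} → 1`. -/
theorem statement16 (M : ℕ) (hM : 1 ≤ M) :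
    Tendsto (fun r : ℝ => Real.pi * tailProb M r / (1 - r ^ 2) ^ ((1 : ℝ) / (2 * M)))
      (nhdsWithin 1 (Set.Iio 1)) (𝓝 1) := by
  have hpi := Real.pi_pos
  have hMR : (0:ℝ) < M := Nat.cast_pos.mpr (by omega)
  set l := 𝓝[<] (1:ℝ) with hl
  set ε : ℝ → ℝ := fun r => (1 - r^2) ^ ((1:ℝ)/M) with hεdef
  set c : ℝ → ℝ := fun r => (1 + r^2 - ε r) / (2*r) with hcdef
  set y : ℝ → ℝ := fun r => Real.sqrt (1 - c r ^ 2) with hydef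
  have hεr : ∀ r, ε r = (1 - r^2) ^ ((1:ℝ)/M) := fun r => rfl
  have hcr : ∀ r, c r = (1 + r^2 - ε r) / (2*r) := fun r => rfl
  have hyr : ∀ r, y r = Real.sqrt (1 - c r ^ 2) := fun r => rfl
  have hIoo : ∀ᶠ r in l, r ∈ Set.Ioo (0:ℝ) 1 :=
    Ioo_mem_nhdsLT_of_mem (by constructor <;> norm_num)
  have hsub : Tendsto (fun r : ℝ => 1 - r^2) l (𝓝 0) := by
    have h : Tendsto (fun r : ℝ => 1 - r^2) (𝓝 1) (𝓝 (1 - 1^2)) :=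
      Continuous.tendsto (by continuity) 1
    simpa using h.mono_left nhdsWithin_le_nhds
  have hε0 : Tendsto ε l (𝓝 0) := by
    have hcont : ContinuousAt (fun x : ℝ => x ^ ((1:ℝ)/M)) 0 :=
      Real.continuousAt_rpow_const 0 _ (Or.inr (by positivity))
    have := hcont.tendsto.comp hsub
    simpa [hεdef, Function.comp_def, Real.zero_rpow (show ((M:ℝ))⁻¹ ≠ 0 by positivity)] using this
  have hεpos : ∀ᶠ r in l, 0 < ε r := by
    filter_upwards [hIoo] with r hr
    exact Real.rpow_pos_of_pos (by nlinarith [hr.1, hr.2]) _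
  -- δ := (1-r)²/ε → 0
  have hδ : Tendsto (fun r : ℝ => (1-r)^2 / ε r) l (𝓝 0) := by
    have hδeq : ∀ᶠ r in l, (1-r)^2 / ε r = (1-r) ^ ((2:ℝ) - 1/M) / (1+r) ^ ((1:ℝ)/M) := by
      filter_upwards [hIoo] with r hr
      have h1r : (0:ℝ) < 1 - r := by linarith [hr.2]
      have h1r' : (0:ℝ) < 1 + r := by linarith [hr.1]
      rw [hεr, show 1 - r^2 = (1-r)*(1+r) by ring, Real.mul_rpow h1r.le h1r'.le,
        Real.rpow_sub h1r, show ((2:ℝ)) = ((2:ℕ):ℝ) by norm_num, Real.rpow_natCast,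
        div_div]
    have hnum : Tendsto (fun r : ℝ => (1-r) ^ ((2:ℝ) - 1/M)) l (𝓝 0) := by
      have h1 : Tendsto (fun r : ℝ => 1 - r) l (𝓝 0) := by
        have := (Continuous.tendsto (by continuity : Continuous fun r:ℝ => 1-r) 1).mono_left
          (nhdsWithin_le_nhds (s := Set.Iio (1:ℝ)))
        simpa using this
      have hp : (0:ℝ) < 2 - 1/M := by
        have h2 : (1:ℝ)/M ≤ 1 := by
          rw [div_le_one hMR]; exact_mod_cast hM
        linarith
      have hp2 : (0:ℝ) < 2 - (M:ℝ)⁻¹ := by rw [← one_div]; exact hp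
      have hcont : ContinuousAt (fun x : ℝ => x ^ ((2:ℝ) - 1/M)) 0 :=
        Real.continuousAt_rpow_const 0 _ (Or.inr hp.le)
      have := hcont.tendsto.comp h1
      simpa [Function.comp_def, one_div, Real.zero_rpow hp2.ne'] using this
    have hden : Tendsto (fun r : ℝ => (1+r) ^ ((1:ℝ)/M)) l (𝓝 ((2:ℝ) ^ ((1:ℝ)/M))) := by
      have h1 : Tendsto (fun r : ℝ => 1 + r) l (𝓝 2) := by
        have := (Continuous.tendsto (by continuity : Continuous fun r:ℝ => 1+r) 1).mono_left
          (nhdsWithin_le_nhds (s := Set.Iio (1:ℝ)))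
        norm_num at this
        exact this
      exact (Real.continuousAt_rpow_const 2 _ (Or.inl two_ne_zero)).tendsto.comp h1
    have hq := hnum.div hden (Real.rpow_pos_of_pos two_pos _).ne'
    rw [zero_div] at hq
    exact Tendsto.congr' (hδeq.mono fun x hx => hx.symm) hq
  -- c → 1
  have hc : Tendsto c l (𝓝 1) := by
    have hnum : Tendsto (fun r : ℝ => 1 + r^2 - ε r) l (𝓝 2) := by
      have h1 : Tendsto (fun r : ℝ => 1 + r^2) l (𝓝 2) := by
        have := (Continuous.tendsto (by continuity : Continuous fun r:ℝ => 1+r^2) 1).mono_left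
          (nhdsWithin_le_nhds (s := Set.Iio (1:ℝ)))
        norm_num at this
        exact this
      simpa using h1.sub hε0
    have hden : Tendsto (fun r : ℝ => 2*r) l (𝓝 2) := by
      have := (Continuous.tendsto (by continuity : Continuous fun r:ℝ => 2*r) 1).mono_left
        (nhdsWithin_le_nhds (s := Set.Iio (1:ℝ)))
      norm_num at this
      exact this
    have := hnum.div hden two_ne_zero
    norm_num at this
    exact this
  have hcevents : ∀ᶠ r in l, 0 < c r ∧ c r < 1 := by
    have h1 : ∀ᶠ r in l, 0 < c r := hc.eventually (eventually_gt_nhds one_pos)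
    have h2 : ∀ᶠ r in l, (1-r)^2 / ε r < 1 := hδ.eventually (eventually_lt_nhds one_pos)
    filter_upwards [h1, h2, hIoo, hεpos] with r ha hb hr hε
    refine ⟨ha, ?_⟩
    have hlt : (1-r)^2 < ε r := (div_lt_one hε).mp hb
    rw [hcr, div_lt_one (by linarith [hr.1] : (0:ℝ) < 2*r)]
    nlinarith
  -- eventual formula
  have hform : ∀ᶠ r in l,
      Real.pi * tailProb M r / (1 - r ^ 2) ^ ((1 : ℝ) / (2 * M))
        = (Real.arcsin (y r) / y r) * (y r / Real.sqrt (ε r)) := by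
    filter_upwards [hIoo, hcevents, hεpos] with r hr hcc hε
    obtain ⟨hc0, hc1⟩ := hcc
    have hc0' : 0 ≤ (1 + r ^ 2 - (1 - r ^ 2) ^ ((1:ℝ)/M)) / (2 * r) := by
      rw [← hεr r, ← hcr r]; exact hc0.le
    have hc1' : (1 + r ^ 2 - (1 - r ^ 2) ^ ((1:ℝ)/M)) / (2 * r) ≤ 1 := by
      rw [← hεr r, ← hcr r]; exact hc1.le
    have hT := tailProb_eq' M hM r hr.1 hr.2 hc0' hc1'
    rw [← hεr r, ← hcr r] at hT
    have hexp : (1 - r^2) ^ ((1:ℝ)/(2*M)) = Real.sqrt (ε r) := by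
      rw [hεr, show (1:ℝ)/(2*M) = (1/M) * (1/2) by ring,
        Real.rpow_mul (by nlinarith [hr.1, hr.2] : (0:ℝ) ≤ 1 - r^2),
        Real.sqrt_eq_rpow]
    have hacs : Real.arccos (c r) = Real.arcsin (y r) := by
      rw [hyr]; exact Real.arccos_eq_arcsin hc0.le
    have hy0 : y r ≠ 0 := by
      rw [hyr]
      exact (Real.sqrt_pos.mpr (by nlinarith)).ne'
    have hs : Real.sqrt (ε r) ≠ 0 := (Real.sqrt_pos.mpr hε).ne'
    rw [hT, hexp, hacs]
    field_simp
  -- factor 1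
  have hyt : Tendsto y l (𝓝[≠] (0:ℝ)) := by
    rw [tendsto_nhdsWithin_iff]
    constructor
    · have h1 : Tendsto (fun r => 1 - (c r)^2) l (𝓝 0) := by
        have h2 := (tendsto_const_nhds (x := (1:ℝ)) (f := l)).sub (hc.mul hc)
        norm_num at h2
        simpa [pow_two] using h2
      have h3 := (Real.continuous_sqrt.tendsto 0).comp h1
      rw [Real.sqrt_zero] at h3
      exact h3.congr fun r => rfl
    · filter_upwards [hcevents] with r hcc
      obtain ⟨h0, h1⟩ := hcc
      simp only [Set.mem_compl_iff, Set.mem_singleton_iff]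
      rw [hyr]
      exact (Real.sqrt_pos.mpr (by nlinarith)).ne'
  have g1 : Tendsto (fun r => Real.arcsin (y r) / y r) l (𝓝 1) := arcsin_div_lim'.comp hyt
  -- factor 2
  have g2 : Tendsto (fun r => y r / Real.sqrt (ε r)) l (𝓝 1) := by
    have hinner : Tendsto (fun r => (1 - (c r)^2) / ε r) l (𝓝 1) := by
      have heq : ∀ᶠ r in l, (1 - (c r)^2)/ε r = (1 - (1-r)^2/ε r) * (1 + c r) / (2*r) := by
        filter_upwards [hIoo, hεpos] with r hr hε
        rw [hcr]
        have h2r : ((2:ℝ)*r) ≠ 0 := by nlinarith [hr.1]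
        field_simp [h2r, hε.ne', hr.1.ne']
        ring
      have h1 : Tendsto (fun r => 1 - (1-r)^2/ε r) l (𝓝 1) := by
        have h := (tendsto_const_nhds (x := (1:ℝ)) (f := l)).sub hδ
        simpa using h
      have h2 : Tendsto (fun r => 1 + c r) l (𝓝 2) := by
        have h := (tendsto_const_nhds (x := (1:ℝ)) (f := l)).add hc
        norm_num at h
        exact h
      have h3 : Tendsto (fun r : ℝ => 2*r) l (𝓝 2) := by
        have := (Continuous.tendsto (by continuity : Continuous fun r:ℝ => 2*r) 1).mono_left
          (nhdsWithin_le_nhds (s := Set.Iio (1:ℝ)))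
        norm_num at this
        exact this
      have := (h1.mul h2).div h3 two_ne_zero
      norm_num at this
      exact Tendsto.congr' (heq.mono fun x hx => hx.symm) this
    have heq2 : ∀ᶠ r in l, y r / Real.sqrt (ε r) = Real.sqrt ((1 - (c r)^2)/ε r) := by
      filter_upwards [hcevents] with r hcc
      obtain ⟨h0, h1⟩ := hcc
      rw [hyr]
      exact (Real.sqrt_div (by nlinarith : (0:ℝ) ≤ 1 - (c r)^2) (ε r)).symm
    have hsq := (Real.continuous_sqrt.tendsto 1).comp hinner
    rw [Real.sqrt_one] at hsq
    exact Tendsto.congr' (heq2.mono fun x hx => hx.symm) (hsq.congr fun r => rfl)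
  have final := g1.mul g2
  rw [one_mul] at final
  exact Tendsto.congr' (hform.mono fun x hx => hx.symm) final
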